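/- arXiv:2308.14554 — 3 statements merged into one kernel-verified Lean document; each statement's English description precedes it below -/
import Mathlib

section
/- Let d be a positive integer and let G be a countable graph with all vertex degrees at most d. If G has Property A, then G is uniformly locally amenable. -/
open scoped ENNReal
open MeasureTheory

namespace AFPaper

variable {V : Type*} {W : Type*}

/-- The ball of radius `r` around `x` in the graph `G`. -/
def gball (G : SimpleGraph V) (x : V) (r : ℕ) : Set V :=
  {y | G.Reachable x y ∧ G.dist x y ≤ r}

/-- All vertex degrees of `G` are at most `d`. -/
def DegLE (G : SimpleGraph V) (d : ℕ) : Prop :=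
  ∀ v : V, (G.neighborSet v).Finite ∧ (G.neighborSet v).ncard ≤ d

/-- The boundary of `F` inside the induced subgraph on the ambient set `L`:
vertices of `F` adjacent (in `G`) to some vertex of `L` outside `F`. -/
def boundaryIn (G : SimpleGraph V) (L F : Set V) : Set V :=
  {x ∈ F | ∃ y ∈ L \ F, G.Adj x y}

/-- The boundary of `F` in `G`. -/
def boundary (G : SimpleGraph V) (F : Set V) : Set V :=
  boundaryIn G Set.univ F

/-- `F` is an `ε`-Følner set with respect to the induced subgraph on `L`. -/
def IsFolnerIn (G : SimpleGraph V) (L : Set V) (ε : ℝ) (F : Set V) : Prop :=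
  F.Finite ∧ ((boundaryIn G L F).ncard : ℝ) < ε * (F.ncard : ℝ)

/-- `F` is an `ε`-Følner set in `G`. -/
def IsFolner (G : SimpleGraph V) (ε : ℝ) (F : Set V) : Prop :=
  IsFolnerIn G Set.univ ε F

/-- The set `F` has diameter at most `r` in `G`. -/
def DiamLE (G : SimpleGraph V) (r : ℕ) (F : Set V) : Prop :=
  ∀ x ∈ F, ∀ y ∈ F, G.Reachable x y ∧ G.dist x y ≤ r

/-- The connected component of `x` in the subgraph of `G` induced on `S`. -/
def componentIn (G : SimpleGraph V) (S : Set V) (x : V) : Set V :=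
  {y | ∃ (hx : x ∈ S) (hy : y ∈ S), (G.induce S).Reachable ⟨x, hx⟩ ⟨y, hy⟩}

/-- All connected components of the subgraph induced on `S` have size at most `k`. -/
def SmallComponents (G : SimpleGraph V) (S : Set V) (k : ℕ) : Prop :=
  ∀ x ∈ S, (componentIn G S x).Finite ∧ (componentIn G S x).ncard ≤ k

/-- A witness for Property A with accuracy `ε` and radius `r`. -/
def PropertyAWith (G : SimpleGraph V) (ε : ℝ) (r : ℕ) : Prop :=
  ∃ Θ : V → V → ℝ,
    (∀ x, (Function.support (Θ x)).Finite) ∧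
    (∀ x y, 0 ≤ Θ x y) ∧
    (∀ x, (∑ᶠ y, Θ x y) = 1) ∧
    (∀ x y, Θ x y ≠ 0 → y ∈ gball G x r) ∧
    (∀ x y, G.Adj x y → (∑ᶠ z, |Θ x z - Θ y z|) < ε)

/-- Property A for graphs. -/
def PropertyA (G : SimpleGraph V) : Prop :=
  ∀ ε : ℝ, 0 < ε → ∃ r : ℕ, 1 ≤ r ∧ PropertyAWith G ε r

/-- Uniform local amenability. -/
def UniformlyLocallyAmenable (G : SimpleGraph V) : Prop :=
  ∀ ε : ℝ, 0 < ε → ∃ k : ℕ, 0 < k ∧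
    ∀ L : Set V, L.Finite → L.Nonempty →
      ∃ M : Set V, M ⊆ L ∧ M.Nonempty ∧ M.ncard ≤ k ∧ IsFolnerIn G L ε M

/-- Local hyperfiniteness. -/
def LocallyHyperfinite (G : SimpleGraph V) : Prop :=
  ∀ ε : ℝ, 0 < ε → ∃ k : ℕ, 0 < k ∧
    ∀ L : Set V, L.Finite → L.Nonempty →
      ∃ L' : Set V, L' ⊆ L ∧ ((L'.ncard : ℝ) < ε * (L.ncard : ℝ)) ∧
        SmallComponents G (L \ L') k

/-- Weighted hyperfiniteness. -/
def WeightedHyperfinite (G : SimpleGraph V) : Prop :=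
  ∀ ε : ℝ, 0 < ε → ∃ k : ℕ, 0 < k ∧
    ∀ w : V → ℝ, (Function.support w).Finite → (∀ x, 0 ≤ w x) →
      ∃ L : Set V, (∑ᶠ x ∈ L, w x) ≤ ε * (∑ᶠ x, w x) ∧ SmallComponents G Lᶜ k

/-- `Y` is a `k`-separator: deleting `Y` leaves components of size at most `k`. -/
def IsSeparator (G : SimpleGraph V) (k : ℕ) (Y : Set V) : Prop :=
  SmallComponents G Yᶜ k

/-- The space of `k`-separators, as a subspace of `V → Bool` (product of discrete
spaces); its Borel σ-algebra coincides with the induced product σ-algebra used here. -/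
abbrev SepSpace (G : SimpleGraph V) (k : ℕ) :=
  {f : V → Bool // IsSeparator G k {x | f x = true}}

/-- Strong hyperfiniteness. -/
def StronglyHyperfinite (G : SimpleGraph V) : Prop :=
  ∀ ε : ℝ, 0 < ε → ∃ k : ℕ, 0 < k ∧
    ∃ μ : Measure (SepSpace G k), μ Set.univ = 1 ∧
      ∀ x : V, μ {Y : SepSpace G k | Y.1 x = true} < ENNReal.ofReal ε

/-- An `(ε,r)`-Følner packing, encoded as a partial equivalence relation
`p : V → V → Bool` ("being in the same member of the packing"); the classes are the
members of the packing, and `p x x = false` exactly when `x` is not covered. -/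
structure IsPacking (G : SimpleGraph V) (ε : ℝ) (r : ℕ) (p : V → V → Bool) : Prop where
  symm : ∀ x y, p x y = true → p y x = true
  trans : ∀ x y z, p x y = true → p y z = true → p x z = true
  folner : ∀ x, p x x = true → IsFolner G ε {y | p x y = true}
  diam : ∀ x, p x x = true → DiamLE G r {y | p x y = true}

/-- The space of `(ε,r)`-packings of `G`, as a subspace of `V → V → Bool`. -/
abbrev PackingSpace (G : SimpleGraph V) (ε : ℝ) (r : ℕ) :=
  {p : V → V → Bool // IsPacking G ε r p}

/-- Strong Følner hyperfiniteness. -/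
def StronglyFolnerHyperfinite (G : SimpleGraph V) : Prop :=
  ∀ ε : ℝ, 0 < ε → ∃ r : ℕ, 1 ≤ r ∧
    ∃ ν : Measure (PackingSpace G ε r), ν Set.univ = 1 ∧
      ∀ x : V, ENNReal.ofReal (1 - ε) < ν {P : PackingSpace G ε r | P.1 x x = true}

/-- A packing is a tiling when it covers every vertex. -/
def IsTiling (p : V → V → Bool) : Prop := ∀ x, p x x = true

/-- Strong almost finiteness. -/
def StronglyAlmostFinite (G : SimpleGraph V) : Prop :=
  ∀ ε : ℝ, 0 < ε → ∃ r : ℕ, 1 ≤ r ∧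
    ∃ ν : Measure (PackingSpace G ε r), ν Set.univ = 1 ∧
      ν {P : PackingSpace G ε r | IsTiling P.1} = 1 ∧
      ∀ x : V, ν {P : PackingSpace G ε r | x ∈ boundary G {y | P.1 x y = true}} <
        ENNReal.ofReal ε

/-- Almost finiteness: `V(G)` can be tiled by `ε`-Følner sets of diameter at most `r`. -/
def AlmostFinite (G : SimpleGraph V) : Prop :=
  ∀ ε : ℝ, 0 < ε → ∃ r : ℕ, ∃ T : Set (Set V),
    (∀ F ∈ T, IsFolner G ε F ∧ DiamLE G r F) ∧
    T.PairwiseDisjoint id ∧ ⋃₀ T = Set.univ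

/-- Uniform amenability. -/
def UniformlyAmenable (G : SimpleGraph V) : Prop :=
  ∀ ε : ℝ, 0 < ε → ∃ r : ℕ, ∀ x : V, ∃ F : Set V, F ⊆ gball G x r ∧ IsFolner G ε F

/-- The `r`-neighborhood of a set `L`. -/
def setBall (G : SimpleGraph V) (L : Set V) (r : ℕ) : Set V :=
  ⋃ x ∈ L, gball G x r

/-- The uniform Følner property. -/
def UniformlyFolner (G : SimpleGraph V) : Prop :=
  ∀ ε : ℝ, 0 < ε → ∃ r : ℕ, 1 < r ∧
    ∀ L : Set V, L.Finite → L.Nonempty →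
      ∃ H : Set V, L ⊆ H ∧ H ⊆ setBall G L r ∧ IsFolner G ε H

/-- The Følner sum `Σ_x Σ_{y ∼ x} |f(x) − f(y)|`. -/
noncomputable def FolnerSum (G : SimpleGraph V) (f : V → ℝ) : ℝ :=
  ∑ᶠ x, ∑ᶠ y ∈ G.neighborSet x, |f x - f y|

/-- `f` is an `ε`-Følner function. -/
def IsFolnerFun (G : SimpleGraph V) (ε : ℝ) (f : V → ℝ) : Prop :=
  (Function.support f).Finite ∧ (∀ x, 0 ≤ f x) ∧ f ≠ 0 ∧
    FolnerSum G f < ε * (∑ᶠ x, f x)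

/-- `f` is an `ε`-Følner probability measure. -/
def IsFolnerProb (G : SimpleGraph V) (ε : ℝ) (f : V → ℝ) : Prop :=
  IsFolnerFun G ε f ∧ (∑ᶠ x, f x) = 1

/-- Følner Property A. -/
def FolnerPropertyA (G : SimpleGraph V) : Prop :=
  ∀ ε : ℝ, 0 < ε → ∃ r : ℕ, 1 ≤ r ∧
    ∃ Θ : V → V → ℝ,
      (∀ x, IsFolnerProb G ε (Θ x)) ∧
      (∀ x y, Θ x y ≠ 0 → y ∈ gball G x r) ∧
      (∀ x y, G.Adj x y → (∑ᶠ z, |Θ x z - Θ y z|) < ε)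

/-- The collection of `ε`-Følner sets of diameter at most `r`. -/
def FolnerSets (G : SimpleGraph V) (ε : ℝ) (r : ℕ) : Set (Set V) :=
  {H | IsFolner G ε H ∧ DiamLE G r H}

/-- Fractional almost finiteness. -/
def FractionallyAlmostFinite (G : SimpleGraph V) : Prop :=
  ∀ ε : ℝ, 0 < ε → ∃ r : ℕ, 1 ≤ r ∧
    ∃ F : Set V → ℝ,
      (∀ H ∈ FolnerSets G ε r, 0 ≤ F H) ∧
      (∀ x : V, ∃ c : ℝ, 0 ≤ c ∧ c < ε ∧
        (∑ᶠ H ∈ {H ∈ FolnerSets G ε r | x ∈ H}, F H) = 1 - c) ∧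
      (∀ x : V, (∑ᶠ H ∈ {H ∈ FolnerSets G ε r | x ∈ boundary G H}, F H) < ε)

/-- Subexponential growth: `lim_{r→∞} sup_x log|B_r(x)|/r = 0`. -/
def SubexpGrowth (G : SimpleGraph V) : Prop :=
  ∀ ε : ℝ, 0 < ε → ∃ R : ℕ, ∀ r : ℕ, R ≤ r → ∀ x : V,
    Real.log ((gball G x r).ncard : ℝ) < ε * (r : ℝ)

/-- The rooted `r`-ball of `G` at `v` is rooted-isomorphic to the rooted `r`-ball of
`H` at `w`. -/
def BallIso (G : SimpleGraph V) (v : V) (H : SimpleGraph W) (w : W) (r : ℕ) : Prop :=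
  ∃ (hv : v ∈ gball G v r) (hw : w ∈ gball H w r)
    (φ : ↥(gball G v r) ≃ ↥(gball H w r)),
      φ ⟨v, hv⟩ = ⟨w, hw⟩ ∧
      ∀ a b : ↥(gball G v r), G.Adj ↑a ↑b ↔ H.Adj ↑(φ a) ↑(φ b)

/-- Neighborhood equivalence of graphs. -/
def NeighborhoodEquiv (G : SimpleGraph V) (H : SimpleGraph W) : Prop :=
  (∀ (r : ℕ) (v : V), ∃ w : W, BallIso G v H w r) ∧
  (∀ (r : ℕ) (w : W), ∃ v : V, BallIso H w G v r)

end AFPaper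

namespace AFPaper

-- step function lemmas
private lemma chi_eq_indicator (a : ℝ) :
    (fun t : ℝ => if t < a then (1:ℝ) else 0) = (Set.Iio a).indicator (fun _ => (1:ℝ)) := by
  ext t; simp [Set.indicator_apply, Set.mem_Iio]

private lemma chi_integrableOn (a : ℝ) :
    IntegrableOn (fun t : ℝ => if t < a then (1:ℝ) else 0) (Set.Ioi 0) := by
  rw [chi_eq_indicator, IntegrableOn, integrable_indicator_iff measurableSet_Iio]
  refine (integrableOn_const_iff (by simp)).2 (Or.inr ?_)
  rw [Measure.restrict_apply measurableSet_Iio, Set.Iio_inter_Ioi, Real.volume_Ioo]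
  exact ENNReal.ofReal_lt_top

private lemma chi_integral (a : ℝ) (ha : 0 ≤ a) :
    ∫ t in Set.Ioi (0:ℝ), (if t < a then (1:ℝ) else 0) = a := by
  have h := chi_eq_indicator a
  calc ∫ t in Set.Ioi (0:ℝ), (if t < a then (1:ℝ) else 0)
      = ∫ t in Set.Ioi (0:ℝ), (Set.Iio a).indicator (fun _ => (1:ℝ)) t := by rw [h]
    _ = ∫ _ in Set.Iio a, (1:ℝ) ∂(volume.restrict (Set.Ioi 0)) :=
        integral_indicator measurableSet_Iio
    _ = a := by
        rw [Measure.restrict_restrict measurableSet_Iio, setIntegral_const,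
          Set.Iio_inter_Ioi, Real.volume_real_Ioo_of_le (by linarith), smul_eq_mul, mul_one]
        ring

private lemma chi_abs_sub (a b t : ℝ) :
    |(if t < a then (1:ℝ) else 0) - (if t < b then (1:ℝ) else 0)|
      = (if t < max a b then (1:ℝ) else 0) - (if t < min a b then (1:ℝ) else 0) := by
  rcases lt_or_ge t a with h1 | h1 <;> rcases lt_or_ge t b with h2 | h2
  · simp [h1, h2, lt_max_iff, lt_min_iff]
  · simp [h1, not_lt.2 h2, lt_max_iff, lt_min_iff]
  · simp [not_lt.2 h1, h2, lt_max_iff, lt_min_iff]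
  · simp [not_lt.2 h1, not_lt.2 h2, lt_max_iff, lt_min_iff]

private lemma chi_abs_integrableOn (a b : ℝ) :
    IntegrableOn (fun t : ℝ =>
      |(if t < a then (1:ℝ) else 0) - (if t < b then (1:ℝ) else 0)|) (Set.Ioi 0) := by
  have : (fun t : ℝ => |(if t < a then (1:ℝ) else 0) - (if t < b then (1:ℝ) else 0)|)
      = fun t => (if t < max a b then (1:ℝ) else 0) - (if t < min a b then (1:ℝ) else 0) := by
    funext t; exact chi_abs_sub a b t
  rw [this]
  exact (chi_integrableOn _).sub (chi_integrableOn _)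

private lemma chi_abs_integral (a b : ℝ) (ha : 0 ≤ a) (hb : 0 ≤ b) :
    ∫ t in Set.Ioi (0:ℝ),
      |(if t < a then (1:ℝ) else 0) - (if t < b then (1:ℝ) else 0)| = |a - b| := by
  have : (fun t : ℝ => |(if t < a then (1:ℝ) else 0) - (if t < b then (1:ℝ) else 0)|)
      = fun t => (if t < max a b then (1:ℝ) else 0) - (if t < min a b then (1:ℝ) else 0) := by
    funext t; exact chi_abs_sub a b t
  rw [this, integral_sub (chi_integrableOn _) (chi_integrableOn _),
    chi_integral _ (le_max_of_le_left ha), chi_integral _ (le_min ha hb)]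
  rw [max_sub_min_eq_abs, abs_sub_comm]

private lemma gball_comm {V : Type*} {G : SimpleGraph V} {x z : V} {r : ℕ} :
    x ∈ gball G z r ↔ z ∈ gball G x r := by
  constructor <;> rintro ⟨h1, h2⟩ <;>
    exact ⟨h1.symm, by rwa [SimpleGraph.dist_comm]⟩

private lemma exists_ball_finset {V : Type*} {G : SimpleGraph V} {d : ℕ} (hdeg : DegLE G d)
    (z : V) (r : ℕ) : ∃ F : Finset V, gball G z r ⊆ ↑F ∧ F.card ≤ (d+1)^r := by
  classical
  induction r with
  | zero =>
    refine ⟨{z}, ?_, by simp⟩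
    rintro y ⟨h1, h2⟩
    have h0 : G.dist z y = 0 := Nat.le_zero.mp h2
    rcases SimpleGraph.dist_eq_zero_iff_eq_or_not_reachable.mp h0 with h | h
    · simp [h]
    · exact absurd h1 h
  | succ n ih =>
    obtain ⟨F, hF, hcard⟩ := ih
    refine ⟨F ∪ F.biUnion (fun y => (hdeg y).1.toFinset), ?_, ?_⟩
    · rintro w ⟨h1, h2⟩
      by_cases hle : G.dist z w ≤ n
      · exact Finset.mem_union_left _ (hF ⟨h1, hle⟩)
      · have hdist : G.dist z w = n + 1 := le_antisymm h2 (Nat.lt_of_not_le hle)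
        obtain ⟨p, hp⟩ := h1.exists_walk_length_eq_dist
        have hnil : ¬ p.reverse.Nil := by
          rw [SimpleGraph.Walk.nil_iff_length_eq, SimpleGraph.Walk.length_reverse, hp, hdist]
          omega
        obtain ⟨u, hadj, q, hq⟩ := SimpleGraph.Walk.not_nil_iff.mp hnil
        have hql : q.length = n := by
          have := congrArg SimpleGraph.Walk.length hq
          rw [SimpleGraph.Walk.length_reverse, hp, hdist] at this
          simp at this
          omega
        have huF : u ∈ F := by
          refine hF ⟨q.reverse.reachable, ?_⟩
          rw [SimpleGraph.dist_comm]
          calc G.dist u z ≤ q.length := SimpleGraph.dist_le q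
            _ = n := hql
        refine Finset.mem_union_right _ (Finset.mem_biUnion.2 ⟨u, huF, ?_⟩)
        rw [Set.Finite.mem_toFinset]
        exact hadj.symm
    · calc (F ∪ F.biUnion (fun y => (hdeg y).1.toFinset)).card
          ≤ F.card + (F.biUnion (fun y => (hdeg y).1.toFinset)).card :=
            Finset.card_union_le _ _
        _ ≤ F.card + ∑ y ∈ F, ((hdeg y).1.toFinset).card := by
            gcongr; exact Finset.card_biUnion_le
        _ ≤ F.card + ∑ _y ∈ F, d := by
            gcongr with y hy
            rw [← Set.ncard_eq_toFinset_card _ (hdeg y).1]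
            exact (hdeg y).2
        _ = F.card * (d + 1) := by rw [Finset.sum_const, smul_eq_mul]; ring
        _ ≤ (d+1)^n * (d+1) := by gcongr
        _ = (d+1)^(n+1) := by ring

/-- Property A implies uniform local amenability. -/
theorem propertyA_implies_uniformlyLocallyAmenable
    (d : ℕ) (hd : 0 < d) {V : Type} [Countable V]
    (G : SimpleGraph V) (hdeg : DegLE G d)
    (hA : PropertyA G) :
    UniformlyLocallyAmenable G := by
  classical
  intro ε hε
  have hd' : (0:ℝ) < d := by exact_mod_cast hd
  have hε' : 0 < ε / (2 * d) := by positivity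
  obtain ⟨r, -, Θ, hfin, hpos, hsum, hball, hvar⟩ := hA (ε / (2 * d)) hε'
  refine ⟨(d+1)^r, pow_pos (by omega) r, ?_⟩
  intro L hLfin hLne
  by_contra hcon
  push_neg at hcon
  set Lf : Finset V := hLfin.toFinset with hLfdef
  have hLfc : (Lf : Set V) = L := hLfin.coe_toFinset
  have hLfne : Lf.Nonempty := by
    obtain ⟨x, hx⟩ := hLne
    exact ⟨x, hLfin.mem_toFinset.2 hx⟩
  set S : Finset V := Lf.biUnion (fun x => (hfin x).toFinset) with hSdef
  have hsupp : ∀ x ∈ Lf, Function.support (Θ x) ⊆ ↑S := by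
    intro x hx z hz
    exact Finset.mem_coe.2 (Finset.mem_biUnion.2 ⟨x, hx, (hfin x).mem_toFinset.2 hz⟩)
  set A : V → ℝ → Finset V := fun z t => Lf.filter (fun x => t < Θ x z) with hAdef
  set B : V → ℝ → Finset V :=
    fun z t => (A z t).filter (fun x => ∃ y ∈ Lf, y ∉ A z t ∧ G.Adj x y) with hBdef
  set N : V → Finset V := fun x => Lf.filter (fun y => G.Adj x y) with hNdef
  have hNcard : ∀ x, ((N x).card : ℝ) ≤ (d : ℝ) := by
    intro x
    have h1 : N x ⊆ (hdeg x).1.toFinset := by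
      intro y hy
      rw [Set.Finite.mem_toFinset]
      simp only [hNdef, Finset.mem_filter] at hy
      exact hy.2
    have : (N x).card ≤ d :=
      le_trans (Finset.card_le_card h1)
        (le_trans (Set.ncard_eq_toFinset_card _ (hdeg x).1).ge (hdeg x).2)
    exact_mod_cast this
  have hbd : ∀ z t, boundaryIn G L ↑(A z t) = ↑(B z t) := by
    intro z t
    ext x
    simp only [boundaryIn, Set.mem_setOf_eq, hBdef, Finset.coe_filter, Set.mem_diff,
      Finset.mem_coe]
    constructor
    · rintro ⟨hxA, y, ⟨hyL, hyA⟩, hadj⟩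
      refine ⟨hxA, y, ?_, fun h => hyA (Finset.mem_coe.2 h), hadj⟩
      rw [← hLfc] at hyL; exact Finset.mem_coe.1 hyL
    · rintro ⟨hxA, y, hyLf, hyA, hadj⟩
      exact ⟨hxA, y, ⟨hLfc ▸ Finset.mem_coe.2 hyLf, fun h => hyA (Finset.mem_coe.1 h)⟩, hadj⟩
  have hAcard : ∀ z t, 0 < t → (A z t).card ≤ (d+1)^r := by
    intro z t ht
    obtain ⟨F, hF, hFc⟩ := exists_ball_finset hdeg z r
    refine le_trans (Finset.card_le_card ?_) hFc
    intro x hx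
    simp only [hAdef, Finset.mem_filter] at hx
    have hΘne : Θ x z ≠ 0 := by
      have h2 := hx.2; intro h; rw [h] at h2; linarith
    exact hF (gball_comm.2 (hball x z hΘne))
  have key : ∀ z t, 0 < t → ε * ((A z t).card : ℝ) ≤ ((B z t).card : ℝ) := by
    intro z t ht
    rcases Finset.eq_empty_or_nonempty (A z t) with he | hne
    · simp [hBdef, he]
    · have hMsub : ↑(A z t) ⊆ L := by
        rw [← hLfc]
        exact Finset.coe_subset.2 (Finset.filter_subset _ _)
      have h1 := hcon ↑(A z t) hMsub (Finset.coe_nonempty.2 hne)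
        (by rw [Set.ncard_coe_finset]; exact hAcard z t ht)
      rw [IsFolnerIn] at h1
      push_neg at h1
      have h2 := h1 (A z t).finite_toSet
      rwa [hbd z t, Set.ncard_coe_finset, Set.ncard_coe_finset] at h2
  have hcardA : ∀ z t, ((A z t).card : ℝ) = ∑ x ∈ Lf, (if t < Θ x z then (1:ℝ) else 0) := by
    intro z t
    simp only [hAdef, Finset.card_filter]
    push_cast
    exact Finset.sum_congr rfl fun x _ => by split <;> norm_num
  have hcount : ∀ z t, ((B z t).card : ℝ)
      ≤ ∑ x ∈ Lf, ∑ y ∈ N x,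
          |(if t < Θ x z then (1:ℝ) else 0) - (if t < Θ y z then (1:ℝ) else 0)| := by
    intro z t
    have h1 : ((B z t).card : ℝ) = ∑ _x ∈ B z t, (1:ℝ) := by simp
    rw [h1]
    have hBLf : B z t ⊆ Lf := le_trans (Finset.filter_subset _ _) (Finset.filter_subset _ _)
    refine le_trans (Finset.sum_le_sum ?_)
      (Finset.sum_le_sum_of_subset_of_nonneg hBLf
        (fun x _ _ => Finset.sum_nonneg fun _ _ => abs_nonneg _))
    intro x hx
    simp only [hBdef, Finset.mem_filter] at hx
    obtain ⟨hxA, y, hyLf, hyA, hadj⟩ := hx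
    have hyN : y ∈ N x := by
      simp only [hNdef, Finset.mem_filter]; exact ⟨hyLf, hadj⟩
    have hterm : |(if t < Θ x z then (1:ℝ) else 0) - (if t < Θ y z then (1:ℝ) else 0)| = 1 := by
      have hx2 : t < Θ x z := by
        simp only [hAdef, Finset.mem_filter] at hxA; exact hxA.2
      have hy2 : ¬ t < Θ y z := by
        intro h
        exact hyA (by simp only [hAdef, Finset.mem_filter]; exact ⟨hyLf, h⟩)
      rw [if_pos hx2, if_neg hy2]; norm_num
    calc (1:ℝ) = _ := hterm.symm
      _ ≤ _ := Finset.single_le_sum (f := fun y' =>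
          |(if t < Θ x z then (1:ℝ) else 0) - (if t < Θ y' z then (1:ℝ) else 0)|)
          (fun _ _ => abs_nonneg _) hyN
  -- integrable step functions
  have hIntf : IntegrableOn
      (fun t : ℝ => ∑ z ∈ S, ∑ x ∈ Lf, (if t < Θ x z then (1:ℝ) else 0)) (Set.Ioi 0) :=
    integrable_finset_sum _ fun z _ => integrable_finset_sum _ fun x _ => chi_integrableOn _
  have hInth : IntegrableOn
      (fun t : ℝ => ∑ z ∈ S, ∑ x ∈ Lf, ∑ y ∈ N x,
        |(if t < Θ x z then (1:ℝ) else 0) - (if t < Θ y z then (1:ℝ) else 0)|) (Set.Ioi 0) :=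
    integrable_finset_sum _ fun z _ => integrable_finset_sum _ fun x _ =>
      integrable_finset_sum _ fun y _ => chi_abs_integrableOn _ _
  have hpw : ∀ t ∈ Set.Ioi (0:ℝ),
      ε * ∑ z ∈ S, ∑ x ∈ Lf, (if t < Θ x z then (1:ℝ) else 0)
      ≤ ∑ z ∈ S, ∑ x ∈ Lf, ∑ y ∈ N x,
        |(if t < Θ x z then (1:ℝ) else 0) - (if t < Θ y z then (1:ℝ) else 0)| := by
    intro t ht
    rw [Finset.mul_sum]
    refine Finset.sum_le_sum fun z _ => ?_
    calc ε * ∑ x ∈ Lf, (if t < Θ x z then (1:ℝ) else 0)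
        = ε * ((A z t).card : ℝ) := by rw [hcardA]
      _ ≤ ((B z t).card : ℝ) := key z t ht
      _ ≤ _ := hcount z t
  have hmono : ∫ t in Set.Ioi (0:ℝ),
        ε * ∑ z ∈ S, ∑ x ∈ Lf, (if t < Θ x z then (1:ℝ) else 0)
      ≤ ∫ t in Set.Ioi (0:ℝ), ∑ z ∈ S, ∑ x ∈ Lf, ∑ y ∈ N x,
        |(if t < Θ x z then (1:ℝ) else 0) - (if t < Θ y z then (1:ℝ) else 0)| :=
    setIntegral_mono_on (hIntf.const_mul ε) hInth measurableSet_Ioi hpw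
  have hLHS : ∫ t in Set.Ioi (0:ℝ),
      ε * ∑ z ∈ S, ∑ x ∈ Lf, (if t < Θ x z then (1:ℝ) else 0) = ε * (Lf.card : ℝ) := by
    rw [integral_const_mul]
    congr 1
    rw [integral_finset_sum _ (fun z _ => integrable_finset_sum _ fun x _ => chi_integrableOn _)]
    have h1 : ∀ z ∈ S, (∫ t in Set.Ioi (0:ℝ), ∑ x ∈ Lf, (if t < Θ x z then (1:ℝ) else 0))
        = ∑ x ∈ Lf, Θ x z := by
      intro z _
      rw [integral_finset_sum _ (fun x _ => chi_integrableOn _)]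
      exact Finset.sum_congr rfl fun x _ => chi_integral _ (hpos x z)
    rw [Finset.sum_congr rfl h1, Finset.sum_comm]
    have h2 : ∀ x ∈ Lf, ∑ z ∈ S, Θ x z = 1 := by
      intro x hx
      rw [← finsum_eq_sum_of_support_subset _ (hsupp x hx)]
      exact hsum x
    rw [Finset.sum_congr rfl h2, Finset.sum_const, nsmul_eq_mul, mul_one]
  have hRHS : ∫ t in Set.Ioi (0:ℝ), ∑ z ∈ S, ∑ x ∈ Lf, ∑ y ∈ N x,
        |(if t < Θ x z then (1:ℝ) else 0) - (if t < Θ y z then (1:ℝ) else 0)|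
      ≤ (Lf.card : ℝ) * (ε / 2) := by
    rw [integral_finset_sum _ (fun z _ => integrable_finset_sum _ fun x _ =>
      integrable_finset_sum _ fun y _ => chi_abs_integrableOn _ _)]
    have h1 : ∀ z ∈ S, (∫ t in Set.Ioi (0:ℝ), ∑ x ∈ Lf, ∑ y ∈ N x,
        |(if t < Θ x z then (1:ℝ) else 0) - (if t < Θ y z then (1:ℝ) else 0)|)
        = ∑ x ∈ Lf, ∑ y ∈ N x, |Θ x z - Θ y z| := by
      intro z _
      rw [integral_finset_sum _ (fun x _ => integrable_finset_sum _ fun y _ =>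
        chi_abs_integrableOn _ _)]
      refine Finset.sum_congr rfl fun x _ => ?_
      rw [integral_finset_sum _ (fun y _ => chi_abs_integrableOn _ _)]
      exact Finset.sum_congr rfl fun y _ => chi_abs_integral _ _ (hpos x z) (hpos y z)
    rw [Finset.sum_congr rfl h1, Finset.sum_comm]
    have h2 : ∀ x ∈ Lf, ∑ z ∈ S, ∑ y ∈ N x, |Θ x z - Θ y z| ≤ ε / 2 := by
      intro x hx
      rw [Finset.sum_comm]
      have h3 : ∀ y ∈ N x, ∑ z ∈ S, |Θ x z - Θ y z| ≤ ε / (2 * d) := by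
        intro y hy
        simp only [hNdef, Finset.mem_filter] at hy
        have hsub : Function.support (fun z => |Θ x z - Θ y z|) ⊆ ↑S := by
          intro z hz
          rw [Function.mem_support] at hz
          by_cases h : Θ x z = 0
          · have hyne : Θ y z ≠ 0 := by
              intro h2; apply hz; rw [h, h2]; simp
            exact hsupp y hy.1 hyne
          · exact hsupp x hx h
        rw [← finsum_eq_sum_of_support_subset _ hsub]
        exact (hvar x y hy.2).le
      calc ∑ y ∈ N x, ∑ z ∈ S, |Θ x z - Θ y z|
          ≤ ∑ _y ∈ N x, ε / (2 * d) := Finset.sum_le_sum h3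
        _ = ((N x).card : ℝ) * (ε / (2 * d)) := by rw [Finset.sum_const, nsmul_eq_mul]
        _ ≤ (d : ℝ) * (ε / (2 * d)) := by
            have := hNcard x
            gcongr
        _ = ε / 2 := by field_simp
    calc ∑ x ∈ Lf, ∑ z ∈ S, ∑ y ∈ N x, |Θ x z - Θ y z|
        ≤ ∑ _x ∈ Lf, ε / 2 := Finset.sum_le_sum h2
      _ = (Lf.card : ℝ) * (ε / 2) := by rw [Finset.sum_const, nsmul_eq_mul]
  have hc1 : (1:ℝ) ≤ (Lf.card : ℝ) := by exact_mod_cast Finset.card_pos.2 hLfne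
  have hfinal : ε * (Lf.card : ℝ) ≤ (Lf.card : ℝ) * (ε / 2) :=
    le_trans (hLHS ▸ hmono) hRHS
  nlinarith


end AFPaper
end

section
/- Let d be a positive integer and let G be a countable graph with all vertex degrees at most d. If G is uniformly locally amenable, then G is locally hyperfinite. -/
open scoped ENNReal
open MeasureTheory

namespace AFPaper


lemma walk_mem_closed (G : SimpleGraph V) {S A : Set V}
    (closed : ∀ x ∈ A, ∀ y ∈ S, G.Adj x y → y ∈ A) :
    ∀ (u v : ↥S), (G.induce S).Walk u v → (u : V) ∈ A →
      ∃ (hu : (u : V) ∈ A) (hv : (v : V) ∈ A),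
        (G.induce A).Reachable ⟨u, hu⟩ ⟨v, hv⟩ := by
  intro u v w
  induction w with
  | nil => intro hu; exact ⟨hu, hu, by rfl⟩
  | cons h p ih =>
    rename_i a b c
    intro ha
    have hadj : G.Adj (a : V) (b : V) := h
    have hb : (b : V) ∈ A := closed _ ha _ b.2 hadj
    obtain ⟨hu, hv, hr⟩ := ih hb
    exact ⟨ha, hv,
      (SimpleGraph.Adj.reachable
        (by exact hadj : (G.induce A).Adj ⟨a, ha⟩ ⟨b, hu⟩)).trans hr⟩

lemma componentIn_subset_closed (G : SimpleGraph V) {S A : Set V}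
    (closed : ∀ x ∈ A, ∀ y ∈ S, G.Adj x y → y ∈ A) {x : V} (hx : x ∈ A) :
    componentIn G S x ⊆ componentIn G A x := by
  rintro y ⟨hxS, hyS, hr⟩
  obtain ⟨w⟩ := hr
  obtain ⟨hu, hv, hr⟩ := walk_mem_closed G closed _ _ w hx
  exact ⟨hu, hv, hr⟩

lemma componentIn_subset (G : SimpleGraph V) (A : Set V) (x : V) :
    componentIn G A x ⊆ A := by
  rintro y ⟨hx, hy, _⟩; exact hy

/-- Uniform local amenability implies local hyperfiniteness. -/
theorem uniformlyLocallyAmenable_implies_locallyHyperfinite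
    (d : ℕ) (hd : 0 < d) {V : Type} [Countable V]
    (G : SimpleGraph V) (hdeg : DegLE G d)
    (hULA : UniformlyLocallyAmenable G) :
    LocallyHyperfinite G := by
  intro ε hε
  obtain ⟨k, hk, hULA'⟩ := hULA ε hε
  refine ⟨k, hk, ?_⟩
  have main : ∀ n : ℕ, ∀ L : Set V, L.Finite → L.ncard ≤ n →
      ∃ L' : Set V, L' ⊆ L ∧ (L = ∅ ∨ ((L'.ncard : ℝ) < ε * (L.ncard : ℝ))) ∧
        SmallComponents G (L \ L') k := by
    intro n
    induction n with
    | zero =>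
      intro L hLf hLc
      have hL : L = ∅ := by
        rw [← Set.ncard_eq_zero hLf]; omega
      refine ⟨∅, by simp, Or.inl hL, ?_⟩
      intro x hx
      rw [hL] at hx; simp at hx
    | succ n ih =>
      intro L hLf hLc
      rcases Set.eq_empty_or_nonempty L with hL | hL
      · refine ⟨∅, by simp, Or.inl hL, ?_⟩
        intro x hx
        rw [hL] at hx; simp at hx
      obtain ⟨M, hML, hMne, hMk, hMfin, hMb⟩ := hULA' L hLf hL
      set B := boundaryIn G L M with hBdef
      set L₁ := L \ M with hL₁def
      have hL1f : L₁.Finite := hLf.diff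
      have hsum : L₁.ncard + M.ncard = L.ncard :=
        Set.ncard_diff_add_ncard_of_subset hML hLf
      have hMpos : 0 < M.ncard := (Set.ncard_pos hMfin).mpr hMne
      have hL1c : L₁.ncard ≤ n := by omega
      obtain ⟨L₁', hsub, hcard, hcomp⟩ := ih L₁ hL1f hL1c
      have hBsub : B ⊆ M := fun x hx => hx.1
      have hBfin : B.Finite := hMfin.subset hBsub
      have hL1'f : L₁'.Finite := hL1f.subset hsub
      refine ⟨B ∪ L₁', ?_, Or.inr ?_, ?_⟩
      · exact Set.union_subset (hBsub.trans hML) (hsub.trans Set.diff_subset)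
      · -- cardinality bound
        have h1 : ((B ∪ L₁').ncard : ℝ) ≤ (B.ncard : ℝ) + (L₁'.ncard : ℝ) := by
          exact_mod_cast Set.ncard_union_le B L₁'
        have h2 : (L₁'.ncard : ℝ) ≤ ε * (L₁.ncard : ℝ) := by
          rcases hcard with h | h
          · have : L₁' = ∅ := Set.subset_eq_empty hsub h
            simp [this, h]
          · exact h.le
        have h3 : ((B).ncard : ℝ) < ε * (M.ncard : ℝ) := hMb
        have h4 : (L₁.ncard : ℝ) + (M.ncard : ℝ) = (L.ncard : ℝ) := by
          exact_mod_cast hsum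
        nlinarith
      · -- small components
        have hS : L \ (B ∪ L₁') = (M \ B) ∪ (L₁ \ L₁') := by
          ext z
          simp only [Set.mem_diff, Set.mem_union, hL₁def]
          constructor
          · rintro ⟨hzL, hz⟩
            push_neg at hz
            by_cases hM : z ∈ M
            · exact Or.inl ⟨hM, hz.1⟩
            · exact Or.inr ⟨⟨hzL, hM⟩, hz.2⟩
          · rintro (⟨hzM, hzB⟩ | ⟨⟨hzL, hzM⟩, hzL'⟩)
            · refine ⟨hML hzM, ?_⟩
              push_neg
              refine ⟨hzB, fun hc => ?_⟩
              exact (hsub hc).2 hzM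
            · refine ⟨hzL, ?_⟩
              push_neg
              exact ⟨fun hc => hzM (hBsub hc), hzL'⟩
        rw [hS]
        set A₁ := M \ B with hA₁
        set A₂ := L₁ \ L₁' with hA₂
        have closed₁ : ∀ x ∈ A₁, ∀ y ∈ A₁ ∪ A₂, G.Adj x y → y ∈ A₁ := by
          rintro x hx y (hy | hy) hadj
          · exact hy
          · exfalso
            exact hx.2 ⟨hx.1, y, ⟨hy.1.1, hy.1.2⟩, hadj⟩
        have closed₂ : ∀ x ∈ A₂, ∀ y ∈ A₁ ∪ A₂, G.Adj x y → y ∈ A₂ := by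
          rintro x hx y (hy | hy) hadj
          · exfalso
            exact hy.2 ⟨hy.1, x, ⟨hx.1.1, hx.1.2⟩, hadj.symm⟩
          · exact hy
        intro x hx
        rcases hx with hx | hx
        · have hsub1 : componentIn G (A₁ ∪ A₂) x ⊆ M :=
            ((componentIn_subset_closed G closed₁ hx).trans
              (componentIn_subset G A₁ x)).trans Set.diff_subset
          exact ⟨hMfin.subset hsub1,
            le_trans (Set.ncard_le_ncard hsub1 hMfin) hMk⟩
        · have hsub2 : componentIn G (A₁ ∪ A₂) x ⊆ componentIn G A₂ x :=
            componentIn_subset_closed G closed₂ hx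
          obtain ⟨hfin, hle⟩ := hcomp x hx
          exact ⟨hfin.subset hsub2,
            le_trans (Set.ncard_le_ncard hsub2 hfin) hle⟩
  intro L hLf hLne
  obtain ⟨L', h1, h2, h3⟩ := main L.ncard L hLf le_rfl
  refine ⟨L', h1, ?_, h3⟩
  rcases h2 with h | h
  · exact absurd h (Set.nonempty_iff_ne_empty.mp hLne)
  · exact h

end AFPaper
end

section
/- Let d be a positive integer and let G be a countable graph with all vertex degrees at most d. If G is weighted hyperfinite, then G is strongly hyperfinite. -/
open scoped ENNReal
open MeasureTheory

namespace AFPaper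


section Aux

variable {V : Type*}

lemma walk_to_induce {G : SimpleGraph V} {S : Set V} :
    ∀ {x y : V} (w : G.Walk x y) (hw : ∀ v ∈ w.support, v ∈ S),
      (G.induce S).Reachable ⟨x, hw x w.start_mem_support⟩ ⟨y, hw y w.end_mem_support⟩ := by
  intro x y w
  induction w with
  | nil => intro hw; exact SimpleGraph.Reachable.refl _
  | @cons u v z h p ih =>
      intro hw
      have hu : u ∈ S := hw u (by simp)
      have hv : v ∈ S := hw v (by simp [SimpleGraph.Walk.support_cons])
      have hw' : ∀ t ∈ p.support, t ∈ S := fun t ht => hw t (by simp [SimpleGraph.Walk.support_cons, ht])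
      have hadj : (G.induce S).Adj ⟨u, hu⟩ ⟨v, hv⟩ := h
      exact hadj.reachable.trans (ih hw')

lemma mem_componentIn_iff {G : SimpleGraph V} {S : Set V} {x y : V} :
    y ∈ componentIn G S x ↔ ∃ w : G.Walk x y, ∀ v ∈ w.support, v ∈ S := by
  constructor
  · rintro ⟨hx, hy, ⟨w⟩⟩
    refine ⟨w.map (SimpleGraph.Embedding.induce S).toHom, ?_⟩
    intro v hv
    have hv2 : v ∈ (w.map (SimpleGraph.Embedding.induce S).toHom).support := hv
    rw [SimpleGraph.Walk.support_map, List.mem_map] at hv2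
    obtain ⟨⟨v', hv'⟩, _, rfl⟩ := hv2
    exact hv'
  · rintro ⟨w, hw⟩
    exact ⟨hw x w.start_mem_support, hw y w.end_mem_support, walk_to_induce w hw⟩

lemma exists_big_subset {C : Set V} {k : ℕ} (h : ¬ (C.Finite ∧ C.ncard ≤ k)) :
    ∃ T : Set V, T ⊆ C ∧ T.Finite ∧ T.ncard = k + 1 := by
  by_cases hf : C.Finite
  · push_neg at h
    obtain ⟨T, hTC, hT⟩ := Set.exists_subset_card_eq (show k + 1 ≤ C.ncard by
      have := h hf; omega)
    exact ⟨T, hTC, hf.subset hTC, hT⟩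
  · obtain ⟨T, hTC, hTf, hT⟩ := (show C.Infinite from hf).exists_subset_ncard_eq (k+1)
    exact ⟨T, hTC, hTf, hT⟩

/-- Closedness of the separator property under pointwise limits (combinatorial form). -/
lemma isSeparator_of_finite_agree {G : SimpleGraph V} {k : ℕ} {f : V → Bool}
    (h : ∀ S : Set V, S.Finite → ∃ Y : V → Bool,
        IsSeparator G k {x | Y x = true} ∧ ∀ x ∈ S, Y x = f x) :
    IsSeparator G k {x | f x = true} := by
  intro x hx
  by_contra hbad
  obtain ⟨T, hTC, hTfin, hTcard⟩ := exists_big_subset hbad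
  choose w hw using fun (y : T) => (mem_componentIn_iff.1 (hTC y.2))
  have hTfin' : Finite T := hTfin.to_subtype
  set S : Set V := ⋃ y : T, {v | v ∈ (w y).support} with hS
  have hSfin : S.Finite := by
    refine Set.finite_iUnion fun y => ?_
    exact (w y).support.finite_toSet
  obtain ⟨Y, hYsep, hagree⟩ := h S hSfin
  have hSc : ∀ v ∈ S, Y v = false := by
    intro v hv
    obtain ⟨y, hy⟩ := Set.mem_iUnion.1 hv
    have : v ∈ ({x | f x = true} : Set V)ᶜ := hw y v hy
    have hvf : f v = false := by simpa using this
    rw [hagree v hv, hvf]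
  have hTne : T.Nonempty := by
    rw [← Set.ncard_pos hTfin]; omega
  obtain ⟨y₀, hy₀⟩ := hTne
  have hxS : x ∈ S := Set.mem_iUnion.2 ⟨⟨y₀, hy₀⟩, (w ⟨y₀, hy₀⟩).start_mem_support⟩
  have hxY : x ∈ ({x | Y x = true} : Set V)ᶜ := by
    simp only [Set.mem_compl_iff, Set.mem_setOf_eq]
    rw [hSc x hxS]; simp
  have hsub : T ⊆ componentIn G ({x | Y x = true} : Set V)ᶜ x := by
    intro y hy
    refine mem_componentIn_iff.2 ⟨w ⟨y, hy⟩, fun v hv => ?_⟩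
    have hvS : v ∈ S := Set.mem_iUnion.2 ⟨⟨y, hy⟩, hv⟩
    simp only [Set.mem_compl_iff, Set.mem_setOf_eq]
    rw [hSc v hvS]; simp
  obtain ⟨hfin, hcard⟩ := hYsep x hxY
  have : T.ncard ≤ k := le_trans (Set.ncard_le_ncard hsub hfin) hcard
  omega


lemma finite_minimax {n : ℕ} {T : Set (Fin n → Bool)} (hT : T.Nonempty) {ε : ℝ} (hε : 0 < ε)
    (hWH : ∀ w : Fin n → ℝ, (∀ i, 0 ≤ w i) →
      ∃ a ∈ T, (∑ i, w i * (if a i then 1 else 0)) ≤ ε * ∑ i, w i) :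
    ∃ (ι : Type) (t : Finset ι) (p : ι → ℝ) (c : ι → (Fin n → Bool)),
      (∀ j ∈ t, 0 ≤ p j) ∧ (∑ j ∈ t, p j = 1) ∧ (∀ j ∈ t, c j ∈ T) ∧
      (∀ i, (∑ j ∈ t.filter (fun j => c j i = true), p j) ≤ ε) := by
  classical
  set v : (Fin n → Bool) → (Fin n → ℝ) := fun a i => if a i then 1 else 0 with hv
  set C : Set (Fin n → ℝ) := convexHull ℝ (v '' T) with hC
  set K : Set (Fin n → ℝ) := {u : (Fin n → ℝ) | ∀ i, u i ≤ ε} with hK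
  have hC1 : Convex ℝ C := convex_convexHull ℝ _
  have hC2 : IsCompact C := ((T.toFinite).image v).isCompact_convexHull ℝ
  have hK1 : Convex ℝ K := by
    intro u hu w hw a b ha hb hab
    intro i
    have : (a • u + b • w) i = a * u i + b * w i := rfl
    rw [this]
    calc a * u i + b * w i ≤ a * ε + b * ε := by
          apply add_le_add
          · exact mul_le_mul_of_nonneg_left (hu i) ha
          · exact mul_le_mul_of_nonneg_left (hw i) hb
      _ = ε := by rw [← add_mul, hab, one_mul]
  have hK2 : IsClosed K := by
    have : K = ⋂ i, {u : (Fin n → ℝ) | u i ≤ ε} := by ext u; simp [hK, Set.mem_iInter]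
    rw [this]
    exact isClosed_iInter fun i => isClosed_le (continuous_apply i) continuous_const
  have hndis : ¬ Disjoint C K := by
    intro hdis
    obtain ⟨f, u0, v0, hfC, huv, hfK⟩ :=
      geometric_hahn_banach_compact_closed hC1 hC2 hK1 hK2 hdis
    set wt : Fin n → ℝ := fun i => -(f (fun j => if i = j then 1 else 0)) with hwt
    have hrep : ∀ x : (Fin n → ℝ), f x = -∑ i, x i * wt i := by
      intro x
      have := LinearMap.pi_apply_eq_sum_univ (f : (Fin n → ℝ) →ₗ[ℝ] ℝ) x
      simp only [ContinuousLinearMap.coe_coe] at this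
      rw [this, ← Finset.sum_neg_distrib]
      refine Finset.sum_congr rfl fun i _ => ?_
      simp only [hwt, smul_eq_mul]
      ring
    have hwtpos : ∀ i, 0 ≤ wt i := by
      intro i
      by_contra hneg
      push_neg at hneg
      set c : ℝ := max 0 ((v0 + ε * ∑ j, wt j) / wt i) with hc
      have hc0 : 0 ≤ c := le_max_left _ _
      set u : (Fin n → ℝ) := fun j => if i = j then ε - c else ε with hu
      have huK : u ∈ K := by
        intro j
        by_cases h : i = j <;> simp [hu, h] <;> linarith
      have hsum : ∑ j, u j * wt j = (∑ j, ε * wt j) - c * wt i := by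
        have hterm : ∀ j ∈ Finset.univ, u j * wt j = ε * wt j - (if j = i then c * wt i else 0) := by
          intro j _
          by_cases h : j = i
          · subst h; simp [hu]; ring
          · have h' : ¬ (i = j) := fun hh => h hh.symm
            simp [hu, h', h]
        rw [Finset.sum_congr rfl hterm, Finset.sum_sub_distrib,
          Finset.sum_ite_eq' Finset.univ i (fun _ => c * wt i)]
        simp
      have hcwt : c * wt i ≤ v0 + ε * ∑ j, wt j := by
        have hq : (v0 + ε * ∑ j, wt j) / wt i ≤ c := le_max_right _ _
        calc c * wt i ≤ ((v0 + ε * ∑ j, wt j) / wt i) * wt i :=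
              mul_le_mul_of_nonpos_right hq (le_of_lt hneg)
          _ = v0 + ε * ∑ j, wt j := div_mul_cancel₀ _ (ne_of_lt hneg)
      have hlt := hfK u huK
      rw [hrep u, hsum] at hlt
      have hsum2 : ∑ j, ε * wt j = ε * ∑ j, wt j := by rw [Finset.mul_sum]
      linarith
    obtain ⟨a, haT, hb⟩ := hWH wt hwtpos
    have h1 : f (v a) < f (fun _ => ε) :=
      lt_trans (lt_trans (hfC _ (subset_convexHull ℝ _ ⟨a, haT, rfl⟩)) huv)
        (hfK _ (fun i => le_refl ε))
    rw [hrep, hrep] at h1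
    have h2 : (∑ i, (fun _ => ε) i * wt i) = ε * ∑ i, wt i := by
      rw [Finset.mul_sum]
    have h3 : (∑ i, v a i * wt i) = ∑ i, wt i * (if a i then 1 else 0) := by
      refine Finset.sum_congr rfl fun i _ => by simp only [hv]; ring
    rw [h2, h3] at h1
    simp only [neg_lt_neg_iff] at h1
    linarith
  obtain ⟨u, huC, huK⟩ := Set.not_disjoint_iff.1 hndis
  rw [hC, convexHull_eq] at huC
  obtain ⟨ι, t, p, z, hp0, hp1, hz, hcM⟩ := huC
  have hchoice : ∀ j, ∃ a : Fin n → Bool, (j ∈ t → (a ∈ T ∧ v a = z j)) := by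
    intro j
    by_cases hj : j ∈ t
    · obtain ⟨a, haT, hav⟩ := hz j hj
      exact ⟨a, fun _ => ⟨haT, hav⟩⟩
    · exact ⟨hT.some, fun h => absurd h hj⟩
  choose c hcspec using hchoice
  refine ⟨ι, t, p, c, hp0, hp1, fun j hj => (hcspec j hj).1, ?_⟩
  intro i
  have hui : u i ≤ ε := huK i
  have hu_eq : u = ∑ j ∈ t, p j • z j := by
    rw [← hcM, Finset.centerMass_eq_of_sum_1 _ _ hp1]
  have : u i = ∑ j ∈ t, p j * z j i := by
    rw [hu_eq]
    simp [Finset.sum_apply, Pi.smul_apply, smul_eq_mul]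
  rw [this] at hui
  have heq : ∑ j ∈ t, p j * z j i = ∑ j ∈ t.filter (fun j => c j i = true), p j := by
    rw [Finset.sum_filter]
    refine Finset.sum_congr rfl fun j hj => ?_
    rw [← (hcspec j hj).2]
    by_cases h : c j i <;> simp [hv, h]
  rwa [heq] at hui


noncomputable def itv (q : ℕ → (ℕ → Bool) → ℝ) (t : ℝ) : ℕ → (ℕ → Bool) × ℝ
  | 0 => (fun _ => false, 0)
  | m+1 =>
    let s := itv q t m
    let a0 := Function.update s.1 m false
    if t < s.2 + q (m+1) a0 then (a0, s.2) else (Function.update s.1 m true, s.2 + q (m+1) a0)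

noncomputable def lep (q : ℕ → (ℕ → Bool) → ℝ) : ℕ → (ℕ → Bool) → ℝ
  | 0, _ => 0
  | m+1, a => lep q m a + (if a m = true then q (m+1) (Function.update a m false) else 0)

/-- The bit sequence assigned to `t`. -/
noncomputable def bitsq (q : ℕ → (ℕ → Bool) → ℝ) (t : ℝ) (i : ℕ) : Bool :=
  (itv q t (i+1)).1 i

section itv

variable {q : ℕ → (ℕ → Bool) → ℝ}
variable (Hc : ∀ m (a b : ℕ → Bool), (∀ i < m, a i = b i) → q m a = q m b)
variable (Hn : ∀ m a, 0 ≤ q m a)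
variable (Ha : ∀ m a, q m a
    = q (m+1) (Function.update a m false) + q (m+1) (Function.update a m true))
variable (H1 : ∀ a, q 0 a = 1)

lemma update_self_of_eq {a : ℕ → Bool} {m : ℕ} {b : Bool} (h : a m = b) :
    Function.update a m b = a := by
  rw [← h]; exact Function.update_eq_self m a

include Hc in
lemma lep_congr : ∀ m (a b : ℕ → Bool), (∀ i < m, a i = b i) → lep q m a = lep q m b := by
  intro m
  induction m with
  | zero => intro a b _; rfl
  | succ m ih =>
      intro a b hab
      have h1 : lep q m a = lep q m b := ih a b (fun i hi => hab i (Nat.lt_succ_of_lt hi))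
      have h2 : a m = b m := hab m (Nat.lt_succ_self m)
      have h3 : q (m+1) (Function.update a m false) = q (m+1) (Function.update b m false) := by
        refine Hc _ _ _ fun i hi => ?_
        by_cases h : i = m
        · subst h; simp
        · have hi' : i < m := by omega
          simp [Function.update_of_ne h, hab i (by omega : i < m + 1)]
      simp only [lep, h1, h2, h3]

include Hn in
lemma lep_nonneg : ∀ m (a : ℕ → Bool), 0 ≤ lep q m a := by
  intro m
  induction m with
  | zero => intro a; simp [lep]
  | succ m ih =>
      intro a
      simp only [lep]
      have h1 := ih a
      by_cases h : a m = true
      · simp only [h, if_true]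
        have := Hn (m+1) (Function.update a m false)
        linarith
      · have hf : a m = false := by simp at h; exact h
        simp [hf]
        linarith

include Hc Hn Ha H1 in
lemma lep_add_le : ∀ m (a : ℕ → Bool), lep q m a + q m a ≤ 1 := by
  intro m
  induction m with
  | zero => intro a; simp [lep, H1 a]
  | succ m ih =>
      intro a
      have hkey := Ha m a
      have hih := ih a
      by_cases h : a m = true
      · have hqa : q (m+1) a = q (m+1) (Function.update a m true) := by
          rw [update_self_of_eq h]
        simp only [lep, h, if_true]
        linarith
      · have hf : a m = false := by simp at h; exact h
        have hqa : q (m+1) a = q (m+1) (Function.update a m false) := by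
          rw [update_self_of_eq hf]
        have h2 := Hn (m+1) (Function.update a m true)
        simp only [lep, hf]
        simp only [Bool.false_eq_true, if_false, add_zero]
        linarith

include Hc Ha H1 in
lemma itv_invariant {t : ℝ} (h0 : 0 ≤ t) (h1 : t < 1) : ∀ m,
    (itv q t m).2 = lep q m (itv q t m).1 ∧ (itv q t m).2 ≤ t
      ∧ t < (itv q t m).2 + q m (itv q t m).1 := by
  intro m
  induction m with
  | zero =>
      refine ⟨rfl, h0, ?_⟩
      show t < 0 + q 0 _
      rw [H1]; linarith
  | succ m ih =>
      obtain ⟨hl, hlo, hhi⟩ := ih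
      set a := (itv q t m).1 with ha
      set ℓ := (itv q t m).2 with hℓ
      have hsplit : q m a = q (m+1) (Function.update a m false)
          + q (m+1) (Function.update a m true) := Ha m a
      have hstep : itv q t (m+1) =
          if t < ℓ + q (m+1) (Function.update a m false)
          then (Function.update a m false, ℓ)
          else (Function.update a m true, ℓ + q (m+1) (Function.update a m false)) := by
        simp only [itv]; rfl
      by_cases hc : t < ℓ + q (m+1) (Function.update a m false)
      · rw [hstep, if_pos hc]
        refine ⟨?_, hlo, hc⟩
        show ℓ = lep q (m+1) (Function.update a m false)
        have : lep q (m+1) (Function.update a m false)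
            = lep q m (Function.update a m false) := by
          simp only [lep, Function.update_self]
          simp
        rw [this, lep_congr Hc m _ a (fun i hi => Function.update_of_ne (by omega) _ _), hl]
      · rw [hstep, if_neg hc]
        push_neg at hc
        constructor
        · show ℓ + q (m+1) (Function.update a m false) = lep q (m+1) (Function.update a m true)
          have : lep q (m+1) (Function.update a m true)
              = lep q m (Function.update a m true)
                + q (m+1) (Function.update (Function.update a m true) m false) := by
            simp only [lep, Function.update_self, if_true]
          rw [this, Function.update_idem,
            lep_congr Hc m _ a (fun i hi => Function.update_of_ne (by omega) _ _), hl]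
        · refine ⟨hc, ?_⟩
          show t < ℓ + q (m+1) (Function.update a m false) + q (m+1) (Function.update a m true)
          linarith
  
lemma itv_stable : ∀ m i, i < m → ∀ t, (itv q t m).1 i = bitsq q t i := by
  intro m
  induction m with
  | zero => omega
  | succ m ih =>
      intro i hi t
      by_cases h : i = m
      · subst h; rfl
      · have hi' : i < m := by omega
        have : (itv q t (m+1)).1 i = (itv q t m).1 i := by
          simp only [itv]
          split
          · exact Function.update_of_ne h _ _
          · exact Function.update_of_ne h _ _
        rw [this, ih i hi' t]

include Hc Hn Ha in
lemma itv_nested : ∀ m (a : ℕ → Bool) (t : ℝ),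
    (lep q (m+1) a ≤ t ∧ t < lep q (m+1) a + q (m+1) a) →
    (lep q m a ≤ t ∧ t < lep q m a + q m a) := by
  intro m a t ⟨hlo, hhi⟩
  have hsplit := Ha m a
  by_cases h : a m = true
  · have hq : q (m+1) a = q (m+1) (Function.update a m true) := by rw [update_self_of_eq h]
    have hlep : lep q (m+1) a = lep q m a + q (m+1) (Function.update a m false) := by
      simp only [lep, h, if_true]
    have := Hn (m+1) (Function.update a m false)
    constructor <;> [linarith; linarith]
  · have hf : a m = false := by simp at h; exact h
    have hq : q (m+1) a = q (m+1) (Function.update a m false) := by rw [update_self_of_eq hf]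
    have hlep : lep q (m+1) a = lep q m a := by
      simp only [lep, hf, Bool.false_eq_true, if_false, add_zero]
    have := Hn (m+1) (Function.update a m true)
    constructor <;> [linarith; linarith]

include Hc Hn Ha in
lemma itv_disjoint : ∀ m (a b : ℕ → Bool), (¬ ∀ i < m, a i = b i) → ∀ t : ℝ,
    (lep q m a ≤ t ∧ t < lep q m a + q m a) →
    (lep q m b ≤ t ∧ t < lep q m b + q m b) → False := by
  intro m
  induction m with
  | zero => intro a b hne; exact absurd (by omega) hne
  | succ m ih =>
      intro a b hne t hta htb
      by_cases hlow : ∀ i < m, a i = b i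
      · have hm : a m ≠ b m := by
          intro h
          exact hne fun i hi => by
            rcases Nat.lt_succ_iff_lt_or_eq.1 hi with h' | h'
            · exact hlow i h'
            · subst h'; exact h
        -- helper applied in both orders
        have helper : ∀ (x y : ℕ → Bool), (∀ i < m, x i = y i) → x m = false → y m = true →
            (lep q (m+1) x ≤ t ∧ t < lep q (m+1) x + q (m+1) x) →
            (lep q (m+1) y ≤ t ∧ t < lep q (m+1) y + q (m+1) y) → False := by
          intro x y hxy hx hy htx hty
          have hlx : lep q (m+1) x = lep q m x := by
            simp only [lep, hx, Bool.false_eq_true, if_false, add_zero]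
          have hqx : q (m+1) (Function.update y m false) = q (m+1) x := by
            refine Hc _ _ _ fun i hi => ?_
            by_cases hh : i = m
            · subst hh; simp [hx]
            · rw [Function.update_of_ne hh]
              exact (hxy i (by omega)).symm
          have hly : lep q (m+1) y = lep q m y + q (m+1) (Function.update y m false) := by
            simp only [lep, hy, if_true]
          have hleq : lep q m x = lep q m y := lep_congr Hc m x y hxy
          have hqxx : q (m+1) x = q (m+1) (Function.update x m false) := by
            rw [update_self_of_eq hx]
          -- t < lep m x + q (m+1) x  and  t ≥ lep m y + q(m+1)(upd y m false) = lep m x + q(m+1) x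
          have h1 := htx.2
          have h2 := hty.1
          rw [hly, hqx] at h2
          linarith [hlx, hleq]
        cases hA : a m with
        | false =>
          have hB : b m = true := by
            cases hbm : b m
            · exact absurd (hA.trans hbm.symm) hm
            · rfl
          exact helper a b hlow hA hB hta htb
        | true =>
          have hB : b m = false := by
            cases hbm : b m
            · rfl
            · exact absurd (hA.trans hbm.symm) hm
          exact helper b a (fun i hi => (hlow i hi).symm) hB hA htb hta
      · exact ih a b hlow t (itv_nested Hc Hn Ha m a t hta) (itv_nested Hc Hn Ha m b t htb)

include Hc Hn Ha H1 in
lemma bitsq_char {t : ℝ} (h0 : 0 ≤ t) (h1 : t < 1) (m : ℕ) (a : ℕ → Bool) :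
    (∀ i < m, bitsq q t i = a i) ↔ (lep q m a ≤ t ∧ t < lep q m a + q m a) := by
  obtain ⟨hl, hlo, hhi⟩ := itv_invariant Hc Ha H1 h0 h1 m
  set b := (itv q t m).1 with hb
  have hbits : ∀ i < m, bitsq q t i = b i := fun i hi => (itv_stable m i hi t).symm
  constructor
  · intro hyp
    have hagree : ∀ i < m, b i = a i := fun i hi => (hbits i hi).symm.trans (hyp i hi)
    have h2 : lep q m b = lep q m a := lep_congr Hc m b a hagree
    have h3 : q m b = q m a := Hc m b a hagree
    rw [← h2, ← h3]
    exact ⟨hl ▸ hlo, hl ▸ hhi⟩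
  · intro hyp
    by_contra hcon
    push_neg at hcon
    obtain ⟨i, hi, hne⟩ := hcon
    have hneq : ¬ ∀ i < m, a i = b i := by
      intro hall
      exact hne ((hbits i hi).trans (hall i hi).symm)
    exact itv_disjoint Hc Hn Ha m a b hneq t hyp ⟨hl ▸ hlo, hl ▸ hhi⟩

end itv


noncomputable def trc {V : Type*} (g : V → ℕ) (Y : V → Bool) (i : ℕ) : Bool := by
  classical exact if (∃ x, g x = i ∧ Y x = true) then true else false

lemma trc_eq_true_iff {V : Type*} {g : V → ℕ} {Y : V → Bool} {i : ℕ} :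
    trc g Y i = true ↔ ∃ x, g x = i ∧ Y x = true := by
  classical
  simp only [trc]
  split_ifs with h <;> simp [h]

lemma trc_g {V : Type*} {g : V → ℕ} (hg : Function.Injective g) (Y : V → Bool) (x : V) :
    trc g Y (g x) = Y x := by
  cases hY : Y x
  · have : ¬ ∃ x', g x' = g x ∧ Y x' = true := by
      rintro ⟨x', hx', hx'Y⟩
      rw [hg hx'] at hx'Y
      rw [hY] at hx'Y; exact absurd hx'Y (by simp)
    cases htr : trc g Y (g x)
    · rfl
    · exact absurd (trc_eq_true_iff.1 htr) this
  · exact trc_eq_true_iff.2 ⟨x, rfl, hY⟩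

lemma boolInd_set {V : Type*} (L : Set V) [∀ x, Decidable (x ∈ L)] :
    {x | (if x ∈ L then true else false) = true} = L := by
  ext x; by_cases h : x ∈ L <;> simp [h]

lemma stage_exists {V : Type} (G : SimpleGraph V) {k : ℕ} {ε : ℝ} (hε : 0 < ε)
    (g : V → ℕ) (hg : Function.Injective g)
    (hWHk : ∀ w : V → ℝ, (Function.support w).Finite → (∀ x, 0 ≤ w x) →
      ∃ L : Set V, (∑ᶠ x ∈ L, w x) ≤ ε * (∑ᶠ x, w x) ∧ SmallComponents G Lᶜ k) :
    ∀ n : ℕ, ∃ (ι : Type) (t : Finset ι) (p : ι → ℝ) (Y : ι → V → Bool),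
      (∀ j ∈ t, 0 ≤ p j) ∧ (∑ j ∈ t, p j = 1) ∧
      (∀ j ∈ t, IsSeparator G k {x | Y j x = true}) ∧
      (∀ x : V, g x < n → (∑ j ∈ t.filter (fun j => Y j x = true), p j) ≤ ε) := by
  classical
  obtain ⟨L₀, -, hL₀⟩ := hWHk 0 (by simp) (fun x => le_refl 0)
  set Y₀ : V → Bool := fun x => if x ∈ L₀ then true else false with hY₀def
  have hY₀ : IsSeparator G k {x | Y₀ x = true} := by
    have h := boolInd_set L₀
    show SmallComponents G {x | Y₀ x = true}ᶜ k
    rw [show {x | Y₀ x = true} = L₀ from h]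
    exact hL₀
  intro n
  set T : Set (Fin n → Bool) :=
    {a | ∃ Y : V → Bool, IsSeparator G k {x | Y x = true} ∧ ∀ i : Fin n, trc g Y i = a i} with hT
  have hTne : T.Nonempty := ⟨fun i => trc g Y₀ i, Y₀, hY₀, fun i => rfl⟩
  have hWH' : ∀ w : Fin n → ℝ, (∀ i, 0 ≤ w i) →
      ∃ a ∈ T, (∑ i, w i * (if a i then 1 else 0)) ≤ ε * ∑ i, w i := by
    intro w hw
    set W : ℕ → ℝ := fun i => if h : i < n then w ⟨i, h⟩ else 0 with hW
    set w' : V → ℝ := fun x => W (g x) with hw'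
    have hWnn : ∀ i, 0 ≤ W i := by
      intro i; rw [hW]; dsimp only; split_ifs with h
      · exact hw _
      · exact le_refl 0
    have hw'nn : ∀ x, 0 ≤ w' x := fun x => hWnn (g x)
    have hsupp : Function.support w' ⊆ g ⁻¹' (Set.Iio n) := by
      intro x hx
      simp only [Function.mem_support] at hx
      by_contra hlt
      simp only [Set.mem_preimage, Set.mem_Iio, not_lt] at hlt
      apply hx
      rw [hw']; dsimp only; rw [hW]; dsimp only
      rw [dif_neg (by omega)]
    have hsuppfin : (Function.support w').Finite :=
      ((Set.finite_Iio n).preimage hg.injOn).subset hsupp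
    obtain ⟨L, hL1, hL2⟩ := hWHk w' hsuppfin hw'nn
    set Y : V → Bool := fun x => if x ∈ L then true else false with hYdef
    have hYsep : IsSeparator G k {x | Y x = true} := by
      show SmallComponents G {x | Y x = true}ᶜ k
      rw [show {x | Y x = true} = L from boolInd_set L]
      exact hL2
    refine ⟨fun i => trc g Y i, ⟨Y, hYsep, fun i => rfl⟩, ?_⟩
    -- total sum bound
    have htotal : (∑ᶠ x, w' x) ≤ ∑ i, w i := by
      rw [finsum_eq_sum w' hsuppfin]
      have himg : ∑ x ∈ hsuppfin.toFinset, w' x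
          = ∑ i ∈ hsuppfin.toFinset.image g, W i := by
        rw [Finset.sum_image (fun x _ y _ h => hg h)]
      rw [himg]
      have hsubset : hsuppfin.toFinset.image g ⊆ Finset.range n := by
        intro i hi
        simp only [Finset.mem_image, Set.Finite.mem_toFinset] at hi
        obtain ⟨x, hx, rfl⟩ := hi
        have := hsupp hx
        simpa [Finset.mem_range] using this
      calc ∑ i ∈ hsuppfin.toFinset.image g, W i
          ≤ ∑ i ∈ Finset.range n, W i :=
            Finset.sum_le_sum_of_subset_of_nonneg hsubset (fun i _ _ => hWnn i)
        _ = ∑ i : Fin n, W ↑i := (Fin.sum_univ_eq_sum_range (fun i => W i) n).symm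
        _ = ∑ i, w i := by
            refine Finset.sum_congr rfl fun i _ => ?_
            rw [hW]; dsimp only; rw [dif_pos i.isLt]
    -- left side
    set fil : Finset (Fin n) := Finset.univ.filter (fun i => trc g Y i = true) with hfil
    have hLHS : (∑ i, w i * (if trc g Y i then 1 else 0)) = ∑ i ∈ fil, w i := by
      rw [hfil, Finset.sum_filter]
      refine Finset.sum_congr rfl fun i _ => ?_
      by_cases h : trc g Y i = true <;> simp [h]
    have hxc : ∀ i : {i // i ∈ fil}, ∃ x : V, g x = ↑i ∧ x ∈ L := by
      rintro ⟨i, hi⟩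
      rw [hfil, Finset.mem_filter] at hi
      obtain ⟨x, hx1, hx2⟩ := trc_eq_true_iff.1 hi.2
      refine ⟨x, hx1, ?_⟩
      by_contra hxL
      rw [hYdef] at hx2; simp only [if_neg hxL] at hx2
      exact absurd hx2 (by simp)
    choose xc hxc1 hxc2 using hxc
    have hsum_fil : ∑ i ∈ fil, w i = ∑ i ∈ fil.attach, w' (xc i) := by
      rw [← Finset.sum_attach fil w]
      refine Finset.sum_congr rfl fun i _ => ?_
      rw [hw']; dsimp only
      rw [hxc1 i, hW]; dsimp only
      have hilt : (↑i : ℕ) < n := (↑i : Fin n).isLt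
      rw [dif_pos hilt]
    set B : Finset V := fil.attach.image xc with hB
    have hsum_B : ∑ i ∈ fil.attach, w' (xc i) = ∑ x ∈ B, w' x := by
      rw [hB, Finset.sum_image]
      intro a _ b _ hab
      have : (↑a : Fin n) = ↑b := by
        have h1 := hxc1 a; have h2 := hxc1 b
        rw [hab] at h1
        have := h1.symm.trans h2
        exact Fin.ext (by exact_mod_cast this)
      exact Subtype.ext this
    have hBL : ∀ x ∈ B, x ∈ L := by
      intro x hx
      rw [hB] at hx
      simp only [Finset.mem_image] at hx
      obtain ⟨i, _, rfl⟩ := hx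
      exact hxc2 i
    have hLfin : (L ∩ Function.support w').Finite := hsuppfin.inter_of_right L
    have hsum_L : ∑ x ∈ B, w' x ≤ ∑ᶠ x ∈ L, w' x := by
      rw [finsum_mem_eq_sum w' hLfin]
      rw [← Finset.sum_filter_ne_zero B (f := w')]
      refine Finset.sum_le_sum_of_subset_of_nonneg ?_ (fun x _ _ => hw'nn x)
      intro x hx
      rw [Finset.mem_filter] at hx
      rw [Set.Finite.mem_toFinset]
      exact ⟨hBL x hx.1, hx.2⟩
    calc (∑ i, w i * (if trc g Y i then 1 else 0))
        = ∑ x ∈ B, w' x := by rw [hLHS, hsum_fil, hsum_B]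
      _ ≤ ∑ᶠ x ∈ L, w' x := hsum_L
      _ ≤ ε * (∑ᶠ x, w' x) := hL1
      _ ≤ ε * ∑ i, w i := mul_le_mul_of_nonneg_left htotal (le_of_lt hε)
  obtain ⟨ι, t, p, c, h1, h2, h3, h4⟩ := finite_minimax hTne hε hWH'
  have hYs : ∀ j, ∃ Y : V → Bool, j ∈ t →
      (IsSeparator G k {x | Y x = true} ∧ ∀ i : Fin n, trc g Y i = c j i) := by
    intro j
    by_cases hj : j ∈ t
    · obtain ⟨Y, hY1, hY2⟩ := h3 j hj
      exact ⟨Y, fun _ => ⟨hY1, hY2⟩⟩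
    · exact ⟨Y₀, fun h => absurd h hj⟩
  choose Ys hYspec using hYs
  refine ⟨ι, t, p, Ys, h1, h2, fun j hj => (hYspec j hj).1, ?_⟩
  intro x hx
  have hfilter : t.filter (fun j => Ys j x = true)
      = t.filter (fun j => c j ⟨g x, hx⟩ = true) := by
    refine Finset.filter_congr fun j hj => ?_
    have := (hYspec j hj).2 ⟨g x, hx⟩
    rw [show ((⟨g x, hx⟩ : Fin n) : ℕ) = g x from rfl] at this
    rw [trc_g hg] at this
    rw [this]
  rw [hfilter]
  exact h4 ⟨g x, hx⟩


theorem weightedHyperfinite_implies_stronglyHyperfinite'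
    {V : Type} [Countable V]
    (G : SimpleGraph V)
    (hWH : ∀ ε : ℝ, 0 < ε → ∃ k : ℕ, 0 < k ∧
      ∀ w : V → ℝ, (Function.support w).Finite → (∀ x, 0 ≤ w x) →
        ∃ L : Set V, (∑ᶠ x ∈ L, w x) ≤ ε * (∑ᶠ x, w x) ∧ SmallComponents G Lᶜ k) :
    ∀ ε : ℝ, 0 < ε → ∃ k : ℕ, 0 < k ∧
      ∃ μ : MeasureTheory.Measure {f : V → Bool // IsSeparator G k {x | f x = true}},
        μ Set.univ = 1 ∧
        ∀ x : V, μ {Y | Y.1 x = true} < ENNReal.ofReal ε := by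
  classical
  intro ε hε
  obtain ⟨k, hk, hWHk⟩ := hWH (ε/2) (by linarith)
  refine ⟨k, hk, ?_⟩
  obtain ⟨g, hg⟩ := exists_injective_nat V
  have hstage := stage_exists G (show (0:ℝ) < ε/2 by linarith) g hg hWHk
  choose ι tt p Ysep hp0 hp1 hYsep hbound using hstage
  -- finite-level cylinder masses at stage nst
  set P : ℕ → ℕ → (ℕ → Bool) → ℝ := fun nst m a =>
    ∑ j ∈ (tt nst).filter (fun j => ∀ i < m, trc g (Ysep nst j) i = a i), p nst j with hPdef
  have hP0 : ∀ nst m a, 0 ≤ P nst m a := by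
    intro nst m a
    exact Finset.sum_nonneg fun j hj => hp0 nst j (Finset.mem_filter.1 hj).1
  have hP1 : ∀ nst m a, P nst m a ≤ 1 := by
    intro nst m a
    calc P nst m a ≤ ∑ j ∈ tt nst, p nst j :=
          Finset.sum_le_sum_of_subset_of_nonneg (Finset.filter_subset _ _)
            (fun j hj _ => hp0 nst j hj)
      _ = 1 := hp1 nst
  have hPcongr : ∀ nst m (a b : ℕ → Bool), (∀ i < m, a i = b i) → P nst m a = P nst m b := by
    intro nst m a b hab
    apply Finset.sum_congr
    · apply Finset.filter_congr
      intro j _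
      constructor
      · intro h i hi; rw [← hab i hi]; exact h i hi
      · intro h i hi; rw [hab i hi]; exact h i hi
    · intros; rfl
  have hPadd : ∀ nst m a, P nst m a
      = P nst (m+1) (Function.update a m false) + P nst (m+1) (Function.update a m true) := by
    intro nst m a
    have hsplit := Finset.sum_filter_add_sum_filter_not
      ((tt nst).filter (fun j => ∀ i < m, trc g (Ysep nst j) i = a i))
      (fun j => trc g (Ysep nst j) m = true) (p nst)
    rw [Finset.filter_filter, Finset.filter_filter] at hsplit
    have he1 : (tt nst).filter
        (fun j => (∀ i < m, trc g (Ysep nst j) i = a i) ∧ trc g (Ysep nst j) m = true)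
        = (tt nst).filter (fun j => ∀ i < m+1, trc g (Ysep nst j) i = Function.update a m true i) := by
      apply Finset.filter_congr
      intro j _
      constructor
      · rintro ⟨h1, h2⟩ i hi
        by_cases h : i = m
        · subst h; rw [Function.update_self]; exact h2
        · rw [Function.update_of_ne h]; exact h1 i (by omega)
      · intro h
        refine ⟨fun i hi => ?_, ?_⟩
        · have := h i (by omega)
          rwa [Function.update_of_ne (by omega)] at this
        · have := h m (by omega)
          rwa [Function.update_self] at this
    have he2 : (tt nst).filter
        (fun j => (∀ i < m, trc g (Ysep nst j) i = a i) ∧ ¬ trc g (Ysep nst j) m = true)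
        = (tt nst).filter (fun j => ∀ i < m+1, trc g (Ysep nst j) i = Function.update a m false i) := by
      apply Finset.filter_congr
      intro j _
      constructor
      · rintro ⟨h1, h2⟩ i hi
        by_cases h : i = m
        · rw [h, Function.update_self]
          cases htr : trc g (Ysep nst j) m
          · rfl
          · exact absurd htr h2
        · rw [Function.update_of_ne h]; exact h1 i (by omega)
      · intro h
        refine ⟨fun i hi => ?_, ?_⟩
        · have := h i (by omega)
          rwa [Function.update_of_ne (by omega)] at this
        · have := h m (by omega)
          rw [Function.update_self] at this
          rw [this]; simp
    rw [he1, he2] at hsplit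
    rw [hPdef]
    dsimp only
    rw [← hsplit]
    ring
  -- ultrafilter limit
  set U : Ultrafilter ℕ := Ultrafilter.of Filter.atTop with hUdef
  have hUle : (U : Filter ℕ) ≤ Filter.atTop := Ultrafilter.of_le _
  set limU : (ℕ → ℝ) → ℝ :=
    fun u => if h : ∃ cq : ℝ, Filter.Tendsto u (U : Filter ℕ) (nhds cq) then h.choose else 0
    with hlimUdef
  have hlim : ∀ u : ℕ → ℝ, (∀ nst, u nst ∈ Set.Icc (0:ℝ) 1) →
      Filter.Tendsto u (U : Filter ℕ) (nhds (limU u)) := by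
    intro u hu
    have hle : (↑(U.map u) : Filter ℝ) ≤ Filter.principal (Set.Icc 0 1) := by
      rw [Ultrafilter.coe_map, Filter.le_principal_iff]
      exact Filter.mem_map.2 (Filter.univ_mem' hu)
    obtain ⟨cq, -, hcq⟩ := (isCompact_Icc (a := (0:ℝ)) (b := 1)).ultrafilter_le_nhds
      (U.map u) hle
    have hex : ∃ cq : ℝ, Filter.Tendsto u (U : Filter ℕ) (nhds cq) := by
      refine ⟨cq, ?_⟩
      rwa [Ultrafilter.coe_map] at hcq
    rw [hlimUdef]
    dsimp only
    rw [dif_pos hex]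
    exact hex.choose_spec
  set q : ℕ → (ℕ → Bool) → ℝ := fun m a => limU (fun nst => P nst m a) with hqdef
  have hqt : ∀ m a, Filter.Tendsto (fun nst => P nst m a) (U : Filter ℕ) (nhds (q m a)) :=
    fun m a => hlim _ (fun nst => ⟨hP0 nst m a, hP1 nst m a⟩)
  have Hn : ∀ m a, 0 ≤ q m a := fun m a =>
    ge_of_tendsto (hqt m a) (Filter.Eventually.of_forall fun nst => hP0 nst m a)
  have H1 : ∀ a, q 0 a = 1 := by
    intro a
    have hconst : (fun nst => P nst 0 a) = fun _ => (1:ℝ) := by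
      funext nst
      rw [hPdef]
      dsimp only
      rw [Finset.filter_true_of_mem (fun j _ => by omega)]
      exact hp1 nst
    exact tendsto_nhds_unique (hqt 0 a) (hconst ▸ tendsto_const_nhds)
  have Hc : ∀ m (a b : ℕ → Bool), (∀ i < m, a i = b i) → q m a = q m b := by
    intro m a b hab
    rw [hqdef]
    dsimp only
    congr 1
    funext nst
    exact hPcongr nst m a b hab
  have Ha : ∀ m a, q m a
      = q (m+1) (Function.update a m false) + q (m+1) (Function.update a m true) := by
    intro m a
    refine tendsto_nhds_unique (hqt m a) ?_
    have : (fun nst => P nst m a) = (fun nst => P nst (m+1) (Function.update a m false)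
        + P nst (m+1) (Function.update a m true)) := funext fun nst => hPadd nst m a
    rw [this]
    exact (hqt (m+1) _).add (hqt (m+1) _)
  -- realizability of positive-mass patterns
  have hreal : ∀ m (a : ℕ → Bool), 0 < q m a → ∃ Y : V → Bool,
      IsSeparator G k {x | Y x = true} ∧ ∀ i < m, trc g Y i = a i := by
    intro m a hpos
    by_contra hno
    push_neg at hno
    have hzero : ∀ nst, P nst m a = 0 := by
      intro nst
      rw [hPdef]
      dsimp only
      rw [Finset.filter_false_of_mem, Finset.sum_empty]
      intro j hj hcond
      obtain ⟨i, hi, hne⟩ := hno (Ysep nst j) (hYsep nst j hj)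
      exact hne (hcond i hi)
    have : q m a = 0 := by
      refine tendsto_nhds_unique (hqt m a) ?_
      have : (fun nst => P nst m a) = fun _ => (0:ℝ) := funext hzero
      rw [this]; exact tendsto_const_nhds
    linarith
  -- the separators given by bit sequences
  have hbitsep : ∀ t0 : ℝ, 0 ≤ t0 → t0 < 1 →
      IsSeparator G k {x | bitsq q t0 (g x) = true} := by
    intro t0 h0 h1
    apply isSeparator_of_finite_agree
    intro S hS
    obtain ⟨b, hb⟩ := (hS.image g).bddAbove
    set m : ℕ := b + 1 with hm
    obtain ⟨hlepeq, hlo, hhi⟩ := itv_invariant Hc Ha H1 h0 h1 m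
    have hqpos : 0 < q m (itv q t0 m).1 := by linarith
    obtain ⟨Y, hYs, hYtr⟩ := hreal m _ hqpos
    refine ⟨Y, hYs, ?_⟩
    intro x hx
    have hgx : g x < m := by
      have : g x ≤ b := hb (Set.mem_image_of_mem g hx)
      omega
    rw [← trc_g hg Y x, hYtr (g x) hgx, itv_stable m (g x) hgx t0]
  -- a default separator
  have htne : (tt 0).Nonempty := Finset.nonempty_of_sum_ne_zero (by rw [hp1 0]; exact one_ne_zero)
  obtain ⟨j₀, hj₀⟩ := htne
  set Ydef : V → Bool := Ysep 0 j₀ with hYdef0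
  have hYdefsep : IsSeparator G k {x | Ydef x = true} := hYsep 0 j₀ hj₀
  -- the map
  set Θ : ℝ → {f : V → Bool // IsSeparator G k {x | f x = true}} :=
    fun t0 => if h : 0 ≤ t0 ∧ t0 < 1
      then ⟨fun x => bitsq q t0 (g x), hbitsep t0 h.1 h.2⟩
      else ⟨Ydef, hYdefsep⟩ with hΘdef
  -- coordinate sets
  have hEset : ∀ (m : ℕ) (a : ℕ → Bool),
      {t0 : ℝ | (0 ≤ t0 ∧ t0 < 1) ∧ ∀ i < m, bitsq q t0 i = a i}
        = Set.Ico (lep q m a) (lep q m a + q m a) := by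
    intro m a
    ext t0
    simp only [Set.mem_setOf_eq, Set.mem_Ico]
    constructor
    · rintro ⟨⟨h0, h1⟩, hbit⟩
      exact (bitsq_char Hc Hn Ha H1 h0 h1 m a).1 hbit
    · intro hIco
      have h0 : 0 ≤ t0 := le_trans (lep_nonneg Hn m a) hIco.1
      have h1 : t0 < 1 := lt_of_lt_of_le hIco.2 (lep_add_le Hc Hn Ha H1 m a)
      exact ⟨⟨h0, h1⟩, (bitsq_char Hc Hn Ha H1 h0 h1 m a).2 hIco⟩
  -- the coordinate event as a finite disjoint union of intervals
  have hSx : ∀ x : V,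
      {t0 : ℝ | (0 ≤ t0 ∧ t0 < 1) ∧ bitsq q t0 (g x) = true}
      = ⋃ a ∈ (Finset.univ.filter
          (fun a : Fin (g x + 1) → Bool => a ⟨g x, Nat.lt_succ_self _⟩ = true)),
          Set.Ico (lep q (g x + 1) (fun i => if h : i < g x + 1 then a ⟨i, h⟩ else false))
            (lep q (g x + 1) (fun i => if h : i < g x + 1 then a ⟨i, h⟩ else false)
              + q (g x + 1) (fun i => if h : i < g x + 1 then a ⟨i, h⟩ else false)) := by
    intro x
    set m : ℕ := g x + 1 with hm
    ext t0
    simp only [Set.mem_setOf_eq, Set.mem_iUnion, Finset.mem_filter, Finset.mem_univ, true_and,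
      exists_prop]
    constructor
    · rintro ⟨⟨h0, h1⟩, hbit⟩
      refine ⟨fun i => bitsq q t0 ↑i, hbit, ?_⟩
      rw [← hEset m _]
      refine ⟨⟨h0, h1⟩, ?_⟩
      intro i hi
      rw [dif_pos hi]
    · rintro ⟨a, ha, hIco⟩
      rw [← hEset m _] at hIco
      obtain ⟨⟨h0, h1⟩, hbit⟩ := hIco
      refine ⟨⟨h0, h1⟩, ?_⟩
      have := hbit (g x) (Nat.lt_succ_self _)
      rw [dif_pos (Nat.lt_succ_self (g x))] at this
      rw [this]
      exact ha
  -- measurability of coordinates of Θ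
  have hcoordset : ∀ x : V, {t0 : ℝ | (Θ t0).1 x = true}
      = {t0 : ℝ | (0 ≤ t0 ∧ t0 < 1) ∧ bitsq q t0 (g x) = true}
        ∪ (if Ydef x = true then (Set.Ico (0:ℝ) 1)ᶜ else ∅) := by
    intro x
    ext t0
    by_cases h : 0 ≤ t0 ∧ t0 < 1
    · simp only [Set.mem_setOf_eq, hΘdef, dif_pos h, Set.mem_union]
      constructor
      · intro hb; exact Or.inl ⟨h, hb⟩
      · rintro (⟨-, hb⟩ | hmem)
        · exact hb
        · exfalso
          by_cases hY : Ydef x = true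
          · rw [if_pos hY] at hmem
            exact hmem (Set.mem_Ico.2 h)
          · rw [if_neg hY] at hmem
            exact hmem
    · simp only [Set.mem_setOf_eq, hΘdef, dif_neg h, Set.mem_union]
      constructor
      · intro hb
        refine Or.inr ?_
        rw [if_pos hb]
        intro hmem
        exact h (Set.mem_Ico.1 hmem)
      · rintro (⟨hh, -⟩ | hmem)
        · exact absurd hh h
        · by_cases hY : Ydef x = true
          · exact hY
          · rw [if_neg hY] at hmem
            exact absurd hmem (Set.notMem_empty t0)
  have hmeascoord : ∀ x : V, MeasurableSet {t0 : ℝ | (Θ t0).1 x = true} := by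
    intro x
    rw [hcoordset x, hSx x]
    apply MeasurableSet.union
    · exact (Finset.univ.filter _).measurableSet_biUnion (fun a _ => measurableSet_Ico)
    · by_cases hY : Ydef x = true
      · rw [if_pos hY]; exact measurableSet_Ico.compl
      · rw [if_neg hY]; exact MeasurableSet.empty
  have hΘmeas : Measurable Θ := by
    apply Measurable.subtype_mk
    rw [measurable_pi_iff]
    intro x
    apply measurable_to_countable'
    intro b
    cases b
    · show MeasurableSet ((fun t0 : ℝ => (Θ t0).1 x) ⁻¹' {false})
      have : (fun t0 : ℝ => (Θ t0).1 x) ⁻¹' {false} = {t0 : ℝ | (Θ t0).1 x = true}ᶜ := by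
        ext t0
        simp only [Set.mem_preimage, Set.mem_singleton_iff, Set.mem_compl_iff, Set.mem_setOf_eq]
        cases hb : (Θ t0).1 x <;> simp
      rw [this]
      exact (hmeascoord x).compl
    · show MeasurableSet ((fun t0 : ℝ => (Θ t0).1 x) ⁻¹' {true})
      have : (fun t0 : ℝ => (Θ t0).1 x) ⁻¹' {true} = {t0 : ℝ | (Θ t0).1 x = true} := by
        ext t0; simp
      rw [this]
      exact hmeascoord x
  -- the measure
  refine ⟨MeasureTheory.Measure.map Θ
    (MeasureTheory.volume.restrict (Set.Ico (0:ℝ) 1)), ?_, ?_⟩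
  · rw [MeasureTheory.Measure.map_apply hΘmeas MeasurableSet.univ, Set.preimage_univ,
      MeasureTheory.Measure.restrict_apply_univ, Real.volume_Ico]
    norm_num
  · intro x
    have hsetmeas : MeasurableSet {Y : {f : V → Bool // IsSeparator G k {x | f x = true}} |
        Y.1 x = true} := by
      have hef : Measurable (fun Y : {f : V → Bool // IsSeparator G k {x | f x = true}} =>
          Y.1 x) := (measurable_pi_apply x).comp measurable_subtype_coe
      exact hef (show MeasurableSet ({true} : Set Bool) from trivial)
    rw [MeasureTheory.Measure.map_apply hΘmeas hsetmeas,
      MeasureTheory.Measure.restrict_apply (hΘmeas hsetmeas)]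
    have hpre : Θ ⁻¹' {Y : {f : V → Bool // IsSeparator G k {x | f x = true}} | Y.1 x = true}
        ∩ Set.Ico (0:ℝ) 1
        = {t0 : ℝ | (0 ≤ t0 ∧ t0 < 1) ∧ bitsq q t0 (g x) = true} := by
      ext t0
      simp only [Set.mem_inter_iff, Set.mem_preimage, Set.mem_setOf_eq, Set.mem_Ico]
      constructor
      · rintro ⟨hb, hIco⟩
        rw [hΘdef] at hb
        dsimp only at hb
        rw [dif_pos hIco] at hb
        exact ⟨hIco, hb⟩
      · rintro ⟨hIco, hb⟩
        refine ⟨?_, hIco⟩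
        rw [hΘdef]
        dsimp only
        rw [dif_pos hIco]
        exact hb
    rw [hpre, hSx x]
    set m : ℕ := g x + 1 with hm
    set A : Finset (Fin m → Bool) :=
      Finset.univ.filter (fun a : Fin m → Bool => a ⟨g x, Nat.lt_succ_self _⟩ = true) with hA
    set exf : (Fin m → Bool) → (ℕ → Bool) :=
      fun a i => if h : i < m then a ⟨i, h⟩ else false with hexf
    have hdisj : Set.PairwiseDisjoint (↑A)
        (fun a : Fin m → Bool => Set.Ico (lep q m (exf a)) (lep q m (exf a) + q m (exf a))) := by
      intro a _ b _ hab
      rw [Function.onFun, Set.disjoint_left]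
      intro t0 h1 h2
      have hne : ¬ ∀ i < m, exf a i = exf b i := by
        intro hall
        apply hab
        funext i
        have := hall ↑i i.isLt
        rw [hexf] at this
        dsimp only at this
        rw [dif_pos i.isLt, dif_pos i.isLt] at this
        simpa using this
      exact itv_disjoint Hc Hn Ha m (exf a) (exf b) hne t0
        (Set.mem_Ico.1 h1) (Set.mem_Ico.1 h2)
    rw [MeasureTheory.measure_biUnion_finset hdisj (fun a _ => measurableSet_Ico)]
    have hvol : ∀ a ∈ A, MeasureTheory.volume
        (Set.Ico (lep q m (exf a)) (lep q m (exf a) + q m (exf a)))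
        = ENNReal.ofReal (q m (exf a)) := by
      intro a _
      rw [Real.volume_Ico]
      congr 1
      ring
    rw [Finset.sum_congr rfl hvol, ← ENNReal.ofReal_sum_of_nonneg (fun a _ => Hn m (exf a))]
    -- the key bound
    have hkey : ∀ nst, m ≤ nst → ∑ a ∈ A, P nst m (exf a)
        = ∑ j ∈ (tt nst).filter (fun j => Ysep nst j x = true), p nst j := by
      intro nst hnst
      rw [hPdef]
      dsimp only
      have hinner : ∀ a ∈ A, ∑ j ∈ (tt nst).filter
            (fun j => ∀ i < m, trc g (Ysep nst j) i = exf a i), p nst j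
          = ∑ j ∈ tt nst, if (∀ i < m, trc g (Ysep nst j) i = exf a i) then p nst j else 0 :=
        fun a _ => Finset.sum_filter _ _
      rw [Finset.sum_congr rfl hinner, Finset.sum_comm]
      have hj : ∀ j ∈ tt nst,
          (∑ a ∈ A, if (∀ i < m, trc g (Ysep nst j) i = exf a i) then p nst j else 0)
          = if Ysep nst j x = true then p nst j else 0 := by
        intro j _
        set rj : Fin m → Bool := fun i => trc g (Ysep nst j) ↑i with hrj
        have hcond : ∀ a : Fin m → Bool,
            (∀ i < m, trc g (Ysep nst j) i = exf a i) ↔ a = rj := by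
          intro a
          constructor
          · intro h
            funext i
            have := h ↑i i.isLt
            rw [hexf] at this
            dsimp only at this
            rw [dif_pos i.isLt] at this
            rw [hrj]
            simpa using this.symm
          · rintro rfl
            intro i hi
            rw [hexf]
            dsimp only
            rw [dif_pos hi]
        have : (∑ a ∈ A, if (∀ i < m, trc g (Ysep nst j) i = exf a i) then p nst j else 0)
            = ∑ a ∈ A, if a = rj then p nst j else 0 := by
          refine Finset.sum_congr rfl fun a _ => ?_
          by_cases h : a = rj
          · rw [if_pos h, if_pos ((hcond a).2 h)]
          · rw [if_neg h, if_neg (fun hc => h ((hcond a).1 hc))]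
        rw [this, Finset.sum_ite_eq' A rj (fun _ => p nst j)]
        have hrjA : rj ∈ A ↔ Ysep nst j x = true := by
          rw [hA, Finset.mem_filter]
          simp only [Finset.mem_univ, true_and]
          rw [hrj]
          dsimp only
          rw [trc_g hg]
        by_cases h : Ysep nst j x = true
        · rw [if_pos (hrjA.2 h), if_pos h]
        · rw [if_neg (fun hc => h (hrjA.1 hc)), if_neg h]
      rw [Finset.sum_congr rfl hj, ← Finset.sum_filter]
    have hsumq : (∑ a ∈ A, q m (exf a)) ≤ ε/2 := by
      have htsum : Filter.Tendsto (fun nst => ∑ a ∈ A, P nst m (exf a)) (U : Filter ℕ)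
          (nhds (∑ a ∈ A, q m (exf a))) :=
        tendsto_finset_sum A (fun a _ => hqt m (exf a))
      refine le_of_tendsto htsum ?_
      have hev : ∀ᶠ nst in (U : Filter ℕ), m ≤ nst :=
        hUle (Filter.eventually_atTop.2 ⟨m, fun nst hnst => hnst⟩)
      refine hev.mono fun nst hnst => ?_
      rw [hkey nst hnst]
      exact hbound nst x (by omega)
    calc ENNReal.ofReal (∑ a ∈ A, q m (exf a)) ≤ ENNReal.ofReal (ε/2) :=
          ENNReal.ofReal_le_ofReal hsumq
      _ < ENNReal.ofReal ε := by
          rw [ENNReal.ofReal_lt_ofReal_iff hε]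
          linarith

end Aux

/-- Weighted hyperfiniteness implies strong hyperfiniteness. -/
theorem weightedHyperfinite_implies_stronglyHyperfinite
    (d : ℕ) (hd : 0 < d) {V : Type} [Countable V]
    (G : SimpleGraph V) (hdeg : DegLE G d)
    (hWH : WeightedHyperfinite G) :
    StronglyHyperfinite G := by
  intro ε hε
  exact weightedHyperfinite_implies_stronglyHyperfinite' G hWH ε hε

end AFPaper
end
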